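/- arXiv:1511.02349 — 2 statements merged into one kernel-verified Lean document; each statement's English description precedes it below -/
import Mathlib

section
/- Let B and H be a matched pair of finite-dimensional Hopf algebras with double cross product A = B ⋈ H. Then the quotient right B-module Q = A/B⁺A is isomorphic to H equipped with the right B-action h ◅ b, via the map b ⋈ h ↦ ε_B(b)h. -/
open TensorProduct

universe u

variable (k : Type u) [Field k] (B H : Type u) [Ring B] [Ring H]
  [HopfAlgebra k B] [HopfAlgebra k H]
  (act1 : H →ₗ[k] B →ₗ[k] B)  -- the action ▻ : H ⊗ B → B
  (act2 : H →ₗ[k] B →ₗ[k] H)  -- the action ◅ : H ⊗ B → H, (h, b) ↦ h ◅ b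

/-- The action `▻` as a map `H ⊗ B → B`. -/
noncomputable def act1L : H ⊗[k] B →ₗ[k] B := TensorProduct.lift act1

/-- The action `◅` as a map `H ⊗ B → H`. -/
noncomputable def act2L : H ⊗[k] B →ₗ[k] H := TensorProduct.lift act2

/-- `Δ(h) ⊗ Δ(b)`, rearranged as `∑ (h₍₁₎ ⊗ b₍₁₎) ⊗ (h₍₂₎ ⊗ b₍₂₎)`. -/
noncomputable def dPair (h : H) (b : B) : (H ⊗[k] B) ⊗[k] (H ⊗[k] B) :=
  TensorProduct.tensorTensorTensorComm k H H B B
    (Coalgebra.comul (R := k) h ⊗ₜ[k] Coalgebra.comul (R := k) b)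

/-- The right action of `b ∈ B` on `A = B ⋈ H`:
`(b' ⊗ h) · b = ∑ b'(h₍₁₎ ▻ b₍₁₎) ⊗ (h₍₂₎ ◅ b₍₂₎)`. -/
noncomputable def rAct (b : B) : B ⊗[k] H →ₗ[k] B ⊗[k] H :=
  (TensorProduct.map (LinearMap.mul' k B) LinearMap.id).comp
    (((TensorProduct.assoc k B B H).symm.toLinearMap).comp
      ((((TensorProduct.map (act1L k B H act1) (act2L k B H act2)).comp
          (((TensorProduct.tensorTensorTensorComm k H H B B).toLinearMap).comp
            (((TensorProduct.mk k (H ⊗[k] H) (B ⊗[k] B)).flip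
                (Coalgebra.comul (R := k) b)).comp
              (Coalgebra.comul (R := k))))).lTensor B)))

/-- The ideal `B⁺A ⊆ A = B ⋈ H` (using `(b ⋈ 1)(b' ⋈ h) = bb' ⋈ h`). -/
noncomputable def augBA : Submodule k (B ⊗[k] H) :=
  Submodule.span k {z : B ⊗[k] H | ∃ b b' : B, ∃ h : H,
    Coalgebra.counit (R := k) b = 0 ∧ z = (b * b') ⊗ₜ[k] h}


set_option maxHeartbeats 1000000
set_option synthInstance.maxHeartbeats 400000

/-- The map `b ⊗ h ↦ ε_B(b) • h`. -/
noncomputable def phi : B ⊗[k] H →ₗ[k] H :=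
  (TensorProduct.lid k H).toLinearMap ∘ₗ
    ((Coalgebra.counit (R := k) (A := B)).rTensor H)

lemma phi_tmul (b : B) (h : H) :
    phi k B H (b ⊗ₜ[k] h) = Coalgebra.counit (R := k) b • h := by
  simp [phi]

lemma augBA_le_ker : augBA k B H ≤ LinearMap.ker (phi k B H) := by
  rw [augBA, Submodule.span_le]
  rintro z ⟨b, b', h, hb, rfl⟩
  simp [phi_tmul, hb]

lemma key (h7 : ∀ (h : H) (b : B), Coalgebra.counit (R := k) (act1 h b) =
      Coalgebra.counit (R := k) h * Coalgebra.counit (R := k) b)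
    (hh : H ⊗[k] H) (bb : B ⊗[k] B) :
    phi k B H (TensorProduct.map (act1L k B H act1) (act2L k B H act2)
      (TensorProduct.tensorTensorTensorComm k H H B B (hh ⊗ₜ[k] bb))) =
    act2 ((TensorProduct.lid k H) ((Coalgebra.counit (R := k)).rTensor H hh))
      ((TensorProduct.lid k B) ((Coalgebra.counit (R := k)).rTensor B bb)) := by
  induction hh using TensorProduct.induction_on with
  | zero => simp
  | add x y hx hy => simp only [add_tmul, map_add, LinearMap.add_apply, hx, hy]
  | tmul h1 h2 =>
    induction bb using TensorProduct.induction_on with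
    | zero => simp
    | add x y hx hy => simp only [tmul_add, map_add, LinearMap.map_add, hx, hy]
    | tmul b1 b2 =>
      simp [act1L, act2L, phi_tmul, h7, mul_smul, smul_comm
        (Coalgebra.counit (R := k) h1) (Coalgebra.counit (R := k) b1)]

lemma key2 (h7 : ∀ (h : H) (b : B), Coalgebra.counit (R := k) (act1 h b) =
      Coalgebra.counit (R := k) h * Coalgebra.counit (R := k) b)
    (h : H) (b : B) :
    phi k B H (TensorProduct.map (act1L k B H act1) (act2L k B H act2)
      (dPair k B H h b)) = act2 h b := by
  rw [dPair, key k B H act1 act2 h7, Coalgebra.rTensor_counit_comul,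
    Coalgebra.rTensor_counit_comul]
  simp

lemma phi_mul_assoc (b' : B) (t : B ⊗[k] H) :
    phi k B H ((TensorProduct.map (LinearMap.mul' k B) LinearMap.id)
      ((TensorProduct.assoc k B B H).symm (b' ⊗ₜ[k] t))) =
    Coalgebra.counit (R := k) b' • phi k B H t := by
  induction t using TensorProduct.induction_on with
  | zero => simp
  | add x y hx hy => simp only [tmul_add, map_add, hx, hy, smul_add]
  | tmul c g => simp [phi_tmul, mul_smul]

lemma rAct_phi (h7 : ∀ (h : H) (b : B), Coalgebra.counit (R := k) (act1 h b) =
      Coalgebra.counit (R := k) h * Coalgebra.counit (R := k) b)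
    (b b' : B) (h : H) :
    phi k B H (rAct k B H act1 act2 b (b' ⊗ₜ[k] h)) =
      Coalgebra.counit (R := k) b' • act2 h b := by
  rw [rAct]
  simp only [LinearMap.comp_apply, LinearMap.lTensor_tmul,
    LinearMap.flip_apply, TensorProduct.mk_apply, LinearEquiv.coe_coe]
  rw [phi_mul_assoc]
  congr 1
  exact key2 k B H act1 act2 h7 h b

/-- **The quotient module of a double cross product.**
Let `B` and `H` be a matched pair of finite-dimensional Hopf algebras, with
`B` a left `H`-module coalgebra via `▻` and `H` a right `B`-module coalgebra
via `◅`, satisfying the matched pair compatibility conditions, and let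
`A = B ⋈ H` be the double cross product.  Then the quotient right `B`-module
`Q = A/B⁺A` is isomorphic to `H` with the right `B`-action `h ◅ b`, via
`b ⋈ h ↦ ε_B(b)·h`. -/
theorem double_cross_product_quotient_module
    [FiniteDimensional k B] [FiniteDimensional k H]
    -- `▻` is a left action of the algebra `H` on `B`
    (h1 : ∀ b : B, act1 1 b = b)
    (h2 : ∀ (g h : H) (b : B), act1 (g * h) b = act1 g (act1 h b))
    -- `◅` is a right action of the algebra `B` on `H`
    (h3 : ∀ h : H, act2 h 1 = h)
    (h4 : ∀ (h : H) (b b' : B), act2 (act2 h b) b' = act2 h (b * b'))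
    -- unit conditions
    (h5 : ∀ h : H, act1 h 1 = Coalgebra.counit (R := k) h • 1)
    (h6 : ∀ b : B, act2 1 b = Coalgebra.counit (R := k) b • 1)
    -- `B` is a left `H`-module coalgebra
    (h7 : ∀ (h : H) (b : B), Coalgebra.counit (R := k) (act1 h b) =
      Coalgebra.counit (R := k) h * Coalgebra.counit (R := k) b)
    (h8 : ∀ (h : H) (b : B), Coalgebra.comul (R := k) (act1 h b) =
      TensorProduct.map (act1L k B H act1) (act1L k B H act1)
        (dPair k B H h b))
    -- `H` is a right `B`-module coalgebra
    (h9 : ∀ (h : H) (b : B), Coalgebra.counit (R := k) (act2 h b) =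
      Coalgebra.counit (R := k) h * Coalgebra.counit (R := k) b)
    (h10 : ∀ (h : H) (b : B), Coalgebra.comul (R := k) (act2 h b) =
      TensorProduct.map (act2L k B H act2) (act2L k B H act2)
        (dPair k B H h b))
    -- matched pair multiplicativity conditions
    (h11 : ∀ (h : H) (b b' : B), act1 h (b * b') =
      LinearMap.mul' k B (TensorProduct.map (act1L k B H act1)
        ((act1.flip b').comp (act2L k B H act2)) (dPair k B H h b)))
    (h12 : ∀ (g h : H) (b : B), act2 (g * h) b =
      LinearMap.mul' k H (TensorProduct.map ((act2 g).comp (act1L k B H act1))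
        (act2L k B H act2) (dPair k B H h b)))
    -- matched pair compatibility condition
    (h13 : ∀ (h : H) (b : B),
      TensorProduct.map (act2L k B H act2) (act1L k B H act1)
          (dPair k B H h b) =
        TensorProduct.comm k B H
          (TensorProduct.map (act1L k B H act1) (act2L k B H act2)
            (dPair k B H h b))) :
    ∃ e : ((B ⊗[k] H) ⧸ augBA k B H) ≃ₗ[k] H,
      (∀ (b : B) (h : H), e (Submodule.Quotient.mk (b ⊗ₜ[k] h)) =
        Coalgebra.counit (R := k) b • h) ∧
      (∀ (b : B) (x : B ⊗[k] H),
        e (Submodule.Quotient.mk (rAct k B H act1 act2 b x)) =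
          act2 (e (Submodule.Quotient.mk x)) b) := by
  set φ := (augBA k B H).liftQ (phi k B H) (augBA_le_ker k B H) with hφ
  set ψ := (augBA k B H).mkQ ∘ₗ (TensorProduct.mk k B H 1) with hψ
  have hcomp1 : φ ∘ₗ ψ = LinearMap.id := by
    ext h
    simp [hφ, hψ, phi_tmul]
  have hpt : ∀ x : B ⊗[k] H, ψ (phi k B H x) = (augBA k B H).mkQ x := by
    intro x
    induction x using TensorProduct.induction_on with
    | zero => simp
    | add x y hx hy => simp only [map_add, hx, hy]
    | tmul b h =>
      rw [phi_tmul]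
      simp only [hψ, LinearMap.comp_apply, TensorProduct.mk_apply]
      rw [TensorProduct.tmul_smul, TensorProduct.smul_tmul', Submodule.mkQ_apply,
        Submodule.mkQ_apply, Submodule.Quotient.eq]
      have : (Coalgebra.counit (R := k) b • (1 : B)) ⊗ₜ[k] h - b ⊗ₜ[k] h
          = ((Coalgebra.counit (R := k) b • (1 : B) - b) * 1) ⊗ₜ[k] h := by
        rw [mul_one, TensorProduct.sub_tmul]
      rw [this]
      refine Submodule.subset_span ⟨Coalgebra.counit (R := k) b • 1 - b, 1, h, ?_, rfl⟩
      simp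
  have hcomp2 : ψ ∘ₗ φ = LinearMap.id := by
    apply LinearMap.ext
    intro q
    obtain ⟨x, rfl⟩ := Submodule.mkQ_surjective _ q
    simp only [LinearMap.comp_apply, LinearMap.id_apply, hφ, Submodule.mkQ_apply,
      Submodule.liftQ_apply]
    exact hpt x
  refine ⟨LinearEquiv.ofLinear φ ψ hcomp1 hcomp2, ?_, ?_⟩
  · intro b h
    simp [hφ, phi_tmul]
  · intro b x
    induction x using TensorProduct.induction_on with
    | zero => simp
    | add x y hx hy =>
      simp only [map_add, Submodule.Quotient.mk_add, LinearMap.map_add, LinearMap.add_apply, hx, hy]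
    | tmul b' h =>
      simp only [LinearEquiv.ofLinear_apply, hφ, Submodule.liftQ_apply]
      rw [rAct_phi k B H act1 act2 h7 b b' h, phi_tmul, map_smul,
        LinearMap.smul_apply]
end

section
/- If ring extensions A ⊇ B and R ⊇ S are Morita equivalent via bimodules P, Q with Q ⊗_S R ≅ P as B-R-bimodules, then the centralizers are isomorphic: A^B ≅ R^S. -/
open TensorProduct MulOpposite

universe u

variable {A B R S : Type u} [Ring A] [Ring B] [Ring R] [Ring S]
  (f : B →+* A) (g : S →+* R)
  (P : Type u) [AddCommGroup P] [Module A P] [Module Rᵐᵒᵖ P]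
    [SMulCommClass A Rᵐᵒᵖ P]
  (Pd : Type u) [AddCommGroup Pd] [Module R Pd] [Module Aᵐᵒᵖ Pd]
    [SMulCommClass R Aᵐᵒᵖ Pd]
  (Q : Type u) [AddCommGroup Q] [Module B Q] [Module Sᵐᵒᵖ Q]
    [SMulCommClass B Sᵐᵒᵖ Q]
  (Qd : Type u) [AddCommGroup Qd] [Module S Qd] [Module Bᵐᵒᵖ Qd]
    [SMulCommClass S Bᵐᵒᵖ Qd]

/-- The tensor product `M ⊗_T N` of a right `T`-module and a left `T`-module
over a (possibly noncommutative) ring `T`, as a quotient of `M ⊗_ℤ N`. -/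
noncomputable def NCT (T M N : Type u) [Ring T] [AddCommGroup M]
    [Module Tᵐᵒᵖ M] [AddCommGroup N] [Module T N] : Type u :=
  (M ⊗[ℤ] N) ⧸ Submodule.span ℤ
    {z : M ⊗[ℤ] N | ∃ (t : T) (m : M) (n : N),
      z = (op t • m) ⊗ₜ[ℤ] n - m ⊗ₜ[ℤ] (t • n)}

noncomputable instance (T M N : Type u) [Ring T] [AddCommGroup M]
    [Module Tᵐᵒᵖ M] [AddCommGroup N] [Module T N] :
    AddCommGroup (NCT T M N) :=
  inferInstanceAs (AddCommGroup ((M ⊗[ℤ] N) ⧸ Submodule.span ℤ _))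

/-- The class of the simple tensor `m ⊗ n` in `M ⊗_T N`. -/
noncomputable def ncmk (T M N : Type u) [Ring T] [AddCommGroup M]
    [Module Tᵐᵒᵖ M] [AddCommGroup N] [Module T N] (m : M) (n : N) :
    NCT T M N :=
  Submodule.Quotient.mk (m ⊗ₜ[ℤ] n)

/-- `Q ⊗_S R`, where `R` is a left `S`-module along `g : S →+* R`. -/
noncomputable def QtensR : Type u :=
  (Q ⊗[ℤ] R) ⧸ Submodule.span ℤ
    {z : Q ⊗[ℤ] R | ∃ (s : S) (q : Q) (r : R),
      z = (op s • q) ⊗ₜ[ℤ] r - q ⊗ₜ[ℤ] (g s * r)}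

noncomputable instance : AddCommGroup (QtensR g Q) :=
  inferInstanceAs (AddCommGroup ((Q ⊗[ℤ] R) ⧸ Submodule.span ℤ _))

noncomputable def qrmk (q : Q) (r : R) : QtensR g Q :=
  Submodule.Quotient.mk (q ⊗ₜ[ℤ] r)


section Infra

/-- Pack a bi-additive function into nested `AddMonoidHom`s. -/
private def mk₂' {M N X : Type u} [AddCommGroup M] [AddCommGroup N] [AddCommGroup X]
    (h : M → N → X)
    (ha : ∀ m m' n, h (m + m') n = h m n + h m' n)
    (hb : ∀ m n n', h m (n + n') = h m n + h m n') : M →+ N →+ X :=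
  AddMonoidHom.mk' (fun m => AddMonoidHom.mk' (h m) (fun n n' => hb m n n'))
    (fun m m' => AddMonoidHom.ext fun n => ha m m' n)

@[simp] private lemma mk₂'_apply {M N X : Type u} [AddCommGroup M] [AddCommGroup N]
    [AddCommGroup X] (h : M → N → X) (ha hb) (m : M) (n : N) :
    mk₂' h ha hb m n = h m n := rfl

variable {T M N X : Type u} [Ring T] [AddCommGroup M] [Module Tᵐᵒᵖ M]
  [AddCommGroup N] [Module T N] [AddCommGroup X]

/-- Lift a balanced bi-additive map to `NCT`. -/
private noncomputable def NCT.lift (h : M →+ N →+ X)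
    (hbal : ∀ (t : T) (m : M) (n : N), h (op t • m) n = h m (t • n)) :
    NCT T M N →+ X :=
  ((Submodule.span ℤ {z : M ⊗[ℤ] N | ∃ (t : T) (m : M) (n : N),
      z = (op t • m) ⊗ₜ[ℤ] n - m ⊗ₜ[ℤ] (t • n)}).liftQ
    (TensorProduct.liftAddHom h (by intro z m n; simp [map_zsmul])).toIntLinearMap
    (by
      rw [Submodule.span_le]
      rintro _ ⟨t, m, n, rfl⟩
      simp [SetLike.mem_coe, LinearMap.mem_ker, map_sub, hbal t m n])).toAddMonoidHom

@[simp] private lemma NCT.lift_mk (h : M →+ N →+ X)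
    (hbal : ∀ (t : T) (m : M) (n : N), h (op t • m) n = h m (t • n)) (m : M) (n : N) :
    NCT.lift h hbal (ncmk T M N m n) = h m n := rfl

private lemma NCT.hom_ext {F G : NCT T M N →+ X}
    (h : ∀ m n, F (ncmk T M N m n) = G (ncmk T M N m n)) (z : NCT T M N) : F z = G z := by
  obtain ⟨w, rfl⟩ := Submodule.Quotient.mk_surjective _ z
  induction w using TensorProduct.induction_on with
  | zero =>
      rw [show (Submodule.Quotient.mk 0 : NCT T M N) = 0 from Submodule.Quotient.mk_zero _]
      exact (map_zero F).trans (map_zero G).symm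
  | tmul m n => exact h m n
  | add x y hx hy =>
      rw [show (Submodule.Quotient.mk (x + y) : NCT T M N)
        = Submodule.Quotient.mk x + Submodule.Quotient.mk y from rfl]
      exact (map_add F _ _).trans ((congrArg₂ (· + ·) hx hy).trans (map_add G _ _).symm)

private lemma ncmk_rel (t : T) (m : M) (n : N) :
    ncmk T M N (op t • m) n = ncmk T M N m (t • n) := by
  refine (Submodule.Quotient.eq _).mpr (Submodule.subset_span ⟨t, m, n, rfl⟩)

private lemma ncmk_add_left (m m' : M) (n : N) :
    ncmk T M N (m + m') n = ncmk T M N m n + ncmk T M N m' n := by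
  show Submodule.Quotient.mk _ = _
  rw [TensorProduct.add_tmul]; rfl

private lemma ncmk_add_right (m : M) (n n' : N) :
    ncmk T M N m (n + n') = ncmk T M N m n + ncmk T M N m n' := by
  show Submodule.Quotient.mk _ = _
  rw [TensorProduct.tmul_add]; rfl

private lemma ncmk_zero_left (n : N) : ncmk T M N (0 : M) n = 0 := by
  show Submodule.Quotient.mk _ = _
  rw [TensorProduct.zero_tmul]; rfl

private def mk₃' {M N K X : Type u} [AddCommGroup M] [AddCommGroup N] [AddCommGroup K]
    [AddCommGroup X] (h : M → N → K → X)
    (ha : ∀ m m' n k, h (m + m') n k = h m n k + h m' n k)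
    (hb : ∀ m n n' k, h m (n + n') k = h m n k + h m n' k)
    (hc : ∀ m n k k', h m n (k + k') = h m n k + h m n k') : M →+ N →+ K →+ X :=
  mk₂' (fun m n => AddMonoidHom.mk' (h m n) (hc m n))
    (fun m m' n => AddMonoidHom.ext fun k => ha m m' n k)
    (fun m n n' => AddMonoidHom.ext fun k => hb m n n' k)

@[simp] private lemma mk₃'_apply {M N K X : Type u} [AddCommGroup M] [AddCommGroup N]
    [AddCommGroup K] [AddCommGroup X] (h : M → N → K → X) (ha hb hc) (m : M) (n : N) (k : K) :
    mk₃' h ha hb hc m n k = h m n k := rfl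


end Infra


section Morita
set_option linter.unusedSectionVars false

variable {U T X Xd : Type u} [Ring U] [Ring T]
  [AddCommGroup X] [Module U X] [Module Tᵐᵒᵖ X] [SMulCommClass U Tᵐᵒᵖ X]
  [AddCommGroup Xd] [Module T Xd] [Module Uᵐᵒᵖ Xd] [SMulCommClass T Uᵐᵒᵖ Xd]
  (ε1 : NCT T X Xd ≃+ U) (ε2 : NCT U Xd X ≃+ T)
  (h1a : ∀ (a : U) (p : X) (q : Xd),
    ε1 (ncmk T X Xd (a • p) q) = a * ε1 (ncmk T X Xd p q))
  (h1b : ∀ (a : U) (p : X) (q : Xd),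
    ε1 (ncmk T X Xd p (op a • q)) = ε1 (ncmk T X Xd p q) * a)
  (h2a : ∀ (t : T) (q : Xd) (p : X),
    ε2 (ncmk U Xd X (t • q) p) = t * ε2 (ncmk U Xd X q p))
  (h2b : ∀ (t : T) (q : Xd) (p : X),
    ε2 (ncmk U Xd X q (op t • p)) = ε2 (ncmk U Xd X q p) * t)

private noncomputable def chat : NCT T X Xd →+ X →+ X :=
  NCT.lift (mk₃' (fun p q x => op (ε2 (ncmk U Xd X q x)) • p)
    (fun p p' q x => by beta_reduce; rw [smul_add])
    (fun p q q' x => by beta_reduce; rw [ncmk_add_left, map_add, op_add, add_smul])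
    (fun p q x x' => by beta_reduce; rw [ncmk_add_right, map_add, op_add, add_smul]))
    (fun t p q => AddMonoidHom.ext fun x => by
      simp only [mk₃'_apply]; beta_reduce
      rw [smul_smul, ← op_mul, h2a])

@[simp] private lemma chat_mk (p : X) (q : Xd) (x : X) :
    chat ε2 h2a (ncmk T X Xd p q) x = op (ε2 (ncmk U Xd X q x)) • p := rfl

private noncomputable def chat' : NCT U Xd X →+ X →+ X :=
  NCT.lift (mk₃' (fun q p₀ x => ε1 (ncmk T X Xd x q) • p₀)
    (fun q q' p₀ x => by beta_reduce; rw [ncmk_add_right, map_add, add_smul])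
    (fun q p₀ p₀' x => by beta_reduce; rw [smul_add])
    (fun q p₀ x x' => by beta_reduce; rw [ncmk_add_left, map_add, add_smul]))
    (fun a q p₀ => AddMonoidHom.ext fun x => by
      simp only [mk₃'_apply]; beta_reduce
      rw [h1b, mul_smul])

@[simp] private lemma chat'_mk (q : Xd) (p₀ : X) (x : X) :
    chat' ε1 h1b (ncmk U Xd X q p₀) x = ε1 (ncmk T X Xd x q) • p₀ := rfl

private noncomputable def cc1 : X →+ X := chat ε2 h2a (ε1.symm 1)

private noncomputable def cc2 : X →+ X := chat' ε1 h1b (ε2.symm 1)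

/-! transporters on `NCT` -/

private noncomputable def lact (b : U) : NCT T X Xd →+ NCT T X Xd :=
  NCT.lift (mk₂' (fun p q => ncmk T X Xd (b • p) q)
    (fun p p' q => by beta_reduce; rw [smul_add, ncmk_add_left])
    (fun p q q' => by beta_reduce; rw [ncmk_add_right]))
    (fun t p q => by
      simp only [mk₂'_apply]
      rw [smul_comm b (op t) p, ncmk_rel])

private noncomputable def ract (b : U) : NCT T X Xd →+ NCT T X Xd :=
  NCT.lift (mk₂' (fun p q => ncmk T X Xd p (op b • q))
    (fun p p' q => by beta_reduce; rw [ncmk_add_left])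
    (fun p q q' => by beta_reduce; rw [smul_add, ncmk_add_right]))
    (fun t p q => by
      simp only [mk₂'_apply]
      rw [ncmk_rel, smul_comm])

private noncomputable def lactd (t : T) : NCT U Xd X →+ NCT U Xd X :=
  NCT.lift (mk₂' (fun q p => ncmk U Xd X (t • q) p)
    (fun q q' p => by beta_reduce; rw [smul_add, ncmk_add_left])
    (fun q p p' => by beta_reduce; rw [ncmk_add_right]))
    (fun a q p => by
      simp only [mk₂'_apply]
      rw [smul_comm t (op a) q, ncmk_rel])

private noncomputable def ractd (t : T) : NCT U Xd X →+ NCT U Xd X :=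
  NCT.lift (mk₂' (fun q p => ncmk U Xd X q (op t • p))
    (fun q q' p => by beta_reduce; rw [ncmk_add_left])
    (fun q p p' => by beta_reduce; rw [smul_add, ncmk_add_right]))
    (fun a q p => by
      simp only [mk₂'_apply]
      rw [ncmk_rel, smul_comm])

@[simp] private lemma lact_mk (b : U) (p : X) (q : Xd) :
    lact b (ncmk T X Xd p q) = ncmk T X Xd (b • p) q := rfl
@[simp] private lemma ract_mk (b : U) (p : X) (q : Xd) :
    ract b (ncmk T X Xd p q) = ncmk T X Xd p (op b • q) := rfl
@[simp] private lemma lactd_mk (t : T) (q : Xd) (p : X) :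
    lactd t (ncmk U Xd X q p) = ncmk U Xd X (t • q) p := rfl
@[simp] private lemma ractd_mk (t : T) (q : Xd) (p : X) :
    ractd t (ncmk U Xd X q p) = ncmk U Xd X q (op t • p) := rfl

include ε1 ε2 h1a h1b h2a h2b

private lemma eps1_lact (b : U) (z : NCT T X Xd) : ε1 (lact b z) = b * ε1 z :=
  NCT.hom_ext (F := ε1.toAddMonoidHom.comp (lact b))
    (G := (AddMonoidHom.mulLeft b).comp ε1.toAddMonoidHom)
    (fun p q => by simp [h1a]) z

private lemma eps1_ract (b : U) (z : NCT T X Xd) : ε1 (ract b z) = ε1 z * b :=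
  NCT.hom_ext (F := ε1.toAddMonoidHom.comp (ract b))
    (G := (AddMonoidHom.mulRight b).comp ε1.toAddMonoidHom)
    (fun p q => by simp [h1b]) z

private lemma eps2_lactd (t : T) (z : NCT U Xd X) : ε2 (lactd t z) = t * ε2 z :=
  NCT.hom_ext (F := ε2.toAddMonoidHom.comp (lactd t))
    (G := (AddMonoidHom.mulLeft t).comp ε2.toAddMonoidHom)
    (fun q p => by simp [h2a]) z

private lemma eps2_ractd (t : T) (z : NCT U Xd X) : ε2 (ractd t z) = ε2 z * t :=
  NCT.hom_ext (F := ε2.toAddMonoidHom.comp (ractd t))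
    (G := (AddMonoidHom.mulRight t).comp ε2.toAddMonoidHom)
    (fun q p => by simp [h2b]) z

private lemma symm_lact (b : U) : lact b (ε1.symm 1) = ε1.symm b := by
  apply ε1.injective
  rw [eps1_lact ε1 ε2 h1a h1b h2a h2b b, AddEquiv.apply_symm_apply,
    AddEquiv.apply_symm_apply, mul_one]

private lemma symm_ract (b : U) : ract b (ε1.symm 1) = ε1.symm b := by
  apply ε1.injective
  rw [eps1_ract ε1 ε2 h1a h1b h2a h2b b, AddEquiv.apply_symm_apply,
    AddEquiv.apply_symm_apply, one_mul]

private lemma symm_lactd (t : T) : lactd t (ε2.symm 1) = ε2.symm t := by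
  apply ε2.injective
  rw [eps2_lactd ε1 ε2 h1a h1b h2a h2b t, AddEquiv.apply_symm_apply,
    AddEquiv.apply_symm_apply, mul_one]

private lemma symm_ractd (t : T) : ractd t (ε2.symm 1) = ε2.symm t := by
  apply ε2.injective
  rw [eps2_ractd ε1 ε2 h1a h1b h2a h2b t, AddEquiv.apply_symm_apply,
    AddEquiv.apply_symm_apply, one_mul]

/-! interchange lemmas -/

private lemma chat_usmul (a : U) (z : NCT T X Xd) (x : X) :
    chat ε2 h2a z (a • x) = chat ε2 h2a (ract a z) x :=
  NCT.hom_ext (F := (chat ε2 h2a).flip (a • x))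
    (G := ((chat ε2 h2a).flip x).comp (ract a))
    (fun p q => by simp [← ncmk_rel]) z

private lemma smul_chat (b : U) (z : NCT T X Xd) (x : X) :
    b • chat ε2 h2a z x = chat ε2 h2a (lact b z) x :=
  NCT.hom_ext (F := (DistribMulAction.toAddMonoidHom X b).comp ((chat ε2 h2a).flip x))
    (G := ((chat ε2 h2a).flip x).comp (lact b))
    (fun p q => by simp [smul_comm]) z

private lemma chat_opsmul (t : T) (z : NCT T X Xd) (x : X) :
    chat ε2 h2a z (op t • x) = op t • chat ε2 h2a z x :=
  NCT.hom_ext (F := (chat ε2 h2a).flip (op t • x))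
    (G := (DistribMulAction.toAddMonoidHom X (op t)).comp ((chat ε2 h2a).flip x))
    (fun p q => by
      simp only [AddMonoidHom.flip_apply, AddMonoidHom.comp_apply,
        DistribMulAction.toAddMonoidHom_apply, chat_mk]
      rw [h2b, op_mul, mul_smul]) z

private lemma chat'_opsmul_arg (t : T) (z : NCT U Xd X) (x : X) :
    chat' ε1 h1b z (op t • x) = chat' ε1 h1b (lactd t z) x :=
  NCT.hom_ext (F := (chat' ε1 h1b).flip (op t • x))
    (G := ((chat' ε1 h1b).flip x).comp (lactd t))
    (fun q p => by simp [ncmk_rel]) z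

private lemma chat'_usmul (a : U) (z : NCT U Xd X) (x : X) :
    chat' ε1 h1b z (a • x) = a • chat' ε1 h1b z x :=
  NCT.hom_ext (F := (chat' ε1 h1b).flip (a • x))
    (G := (DistribMulAction.toAddMonoidHom X a).comp ((chat' ε1 h1b).flip x))
    (fun q p => by
      simp only [AddMonoidHom.flip_apply, AddMonoidHom.comp_apply,
        DistribMulAction.toAddMonoidHom_apply, chat'_mk]
      rw [h1a, mul_smul]) z

private lemma opsmul_chat' (t : T) (z : NCT U Xd X) (x : X) :
    op t • chat' ε1 h1b z x = chat' ε1 h1b (ractd t z) x :=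
  NCT.hom_ext (F := (DistribMulAction.toAddMonoidHom X (op t)).comp ((chat' ε1 h1b).flip x))
    (G := ((chat' ε1 h1b).flip x).comp (ractd t))
    (fun q p => by simp [smul_comm]) z

/-! properties of `cc1`, `cc2` -/

private lemma smul_cc1 (b : U) (x : X) :
    b • cc1 ε1 ε2 h2a x = chat ε2 h2a (ε1.symm b) x := by
  rw [cc1, smul_chat ε1 ε2 h1a h1b h2a h2b, symm_lact ε1 ε2 h1a h1b h2a h2b]

private lemma cc1_usmul (a : U) (x : X) :
    cc1 ε1 ε2 h2a (a • x) = a • cc1 ε1 ε2 h2a x := by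
  rw [cc1, chat_usmul ε1 ε2 h1a h1b h2a h2b, symm_ract ε1 ε2 h1a h1b h2a h2b]
  exact (smul_cc1 ε1 ε2 h1a h1b h2a h2b a x).symm

private lemma cc1_opsmul (t : T) (x : X) :
    cc1 ε1 ε2 h2a (op t • x) = op t • cc1 ε1 ε2 h2a x :=
  chat_opsmul ε1 ε2 h1a h1b h2a h2b t _ x

private lemma opsmul_cc2 (t : T) (x : X) :
    op t • cc2 ε1 ε2 h1b x = chat' ε1 h1b (ε2.symm t) x := by
  rw [cc2, opsmul_chat' ε1 ε2 h1a h1b h2a h2b, symm_ractd ε1 ε2 h1a h1b h2a h2b]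

private lemma cc2_usmul (a : U) (x : X) :
    cc2 ε1 ε2 h1b (a • x) = a • cc2 ε1 ε2 h1b x :=
  chat'_usmul ε1 ε2 h1a h1b h2a h2b a _ x

private lemma cc2_opsmul (t : T) (x : X) :
    cc2 ε1 ε2 h1b (op t • x) = op t • cc2 ε1 ε2 h1b x := by
  rw [cc2, chat'_opsmul_arg ε1 ε2 h1a h1b h2a h2b, symm_lactd ε1 ε2 h1a h1b h2a h2b,
    ← opsmul_cc2 ε1 ε2 h1a h1b h2a h2b, cc2]

private lemma KGI (x a : X) (q : Xd) :
    ε1 (ncmk T X Xd x q) • cc1 ε1 ε2 h2a a = op (ε2 (ncmk U Xd X q a)) • x := by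
  rw [smul_cc1 ε1 ε2 h1a h1b h2a h2b, AddEquiv.symm_apply_apply, chat_mk]

private lemma KGI' (a p₀ : X) (q : Xd) :
    ε1 (ncmk T X Xd a q) • p₀ = op (ε2 (ncmk U Xd X q p₀)) • cc2 ε1 ε2 h1b a := by
  rw [opsmul_cc2 ε1 ε2 h1a h1b h2a h2b, AddEquiv.symm_apply_apply, chat'_mk]

private lemma cc2_cc1 (a : X) : cc2 ε1 ε2 h1b (cc1 ε1 ε2 h2a a) = a := by
  have key : ∀ z, cc2 ε1 ε2 h1b (chat ε2 h2a z a) = ε1 z • a :=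
    NCT.hom_ext (F := (cc2 ε1 ε2 h1b).comp ((chat ε2 h2a).flip a))
      (G := AddMonoidHom.mk' (fun z => ε1 z • a) (by intro z w; beta_reduce; rw [map_add, add_smul]))
      (fun p q => by
        simp only [AddMonoidHom.comp_apply, AddMonoidHom.flip_apply, chat_mk,
          AddMonoidHom.mk'_apply]
        rw [cc2_opsmul ε1 ε2 h1a h1b h2a h2b, ← KGI' ε1 ε2 h1a h1b h2a h2b])
  rw [cc1, key, AddEquiv.apply_symm_apply, one_smul]

private lemma cc1_cc2 (a : X) : cc1 ε1 ε2 h2a (cc2 ε1 ε2 h1b a) = a := by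
  have key : ∀ z, cc1 ε1 ε2 h2a (chat' ε1 h1b z a) = op (ε2 z) • a :=
    NCT.hom_ext (F := (cc1 ε1 ε2 h2a).comp ((chat' ε1 h1b).flip a))
      (G := AddMonoidHom.mk' (fun z => op (ε2 z) • a)
        (by intro z w; beta_reduce; rw [map_add, op_add, add_smul]))
      (fun q p₀ => by
        simp only [AddMonoidHom.comp_apply, AddMonoidHom.flip_apply, chat'_mk,
          AddMonoidHom.mk'_apply]
        rw [cc1_usmul ε1 ε2 h1a h1b h2a h2b, KGI ε1 ε2 h1a h1b h2a h2b])
  rw [cc2, key, AddEquiv.apply_symm_apply, op_one, one_smul]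

/-! main abstract lemmas -/

private lemma eq_zero_of_smul_zero (a : U) (h : ∀ x : X, a • x = 0) : a = 0 := by
  have hz : lact (T := T) (Xd := Xd) a (ε1.symm 1) = (0 : NCT T X Xd →+ NCT T X Xd) (ε1.symm 1) :=
    NCT.hom_ext (F := lact a) (G := 0) (fun p q => by
      simp only [lact_mk, AddMonoidHom.zero_apply]
      rw [h p, ncmk_zero_left]) _
  have ha : a = ε1 (lact a (ε1.symm 1)) := by
    rw [symm_lact ε1 ε2 h1a h1b h2a h2b, AddEquiv.apply_symm_apply]
  rw [ha, hz, AddMonoidHom.zero_apply, map_zero]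

private lemma lmul_surj (φ : X →+ X) (hφ : ∀ (t : T) (x : X), φ (op t • x) = op t • φ x) :
    ∃ a : U, ∀ x, φ x = a • x := by
  have ha' : ∀ (p p' : X) (q : Xd), ncmk T X Xd (φ (p + p')) q
      = ncmk T X Xd (φ p) q + ncmk T X Xd (φ p') q := fun p p' q => by
    rw [map_add, ncmk_add_left]
  have hb' : ∀ (p : X) (q q' : Xd), ncmk T X Xd (φ p) (q + q')
      = ncmk T X Xd (φ p) q + ncmk T X Xd (φ p) q' := fun p q q' => by
    rw [ncmk_add_right]
  set mf : NCT T X Xd →+ NCT T X Xd :=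
    NCT.lift (mk₂' (fun p q => ncmk T X Xd (φ p) q) ha' hb')
      (fun t p q => by simp only [mk₂'_apply]; rw [hφ, ncmk_rel]) with hmf
  have mf_mk : ∀ p q, mf (ncmk T X Xd p q) = ncmk T X Xd (φ p) q := fun p q => rfl
  refine ⟨ε1 (mf (ε1.symm 1)), fun y => ?_⟩
  have key : ∀ z x, ε1 (mf z) • x = cc2 ε1 ε2 h1b (φ (chat ε2 h2a z x)) := by
    intro z x
    refine NCT.hom_ext
      (F := AddMonoidHom.mk' (fun z => ε1 (mf z) • x)
        (by intro z w; beta_reduce; rw [map_add, map_add, add_smul]))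
      (G := (cc2 ε1 ε2 h1b).comp (φ.comp ((chat ε2 h2a).flip x)))
      (fun p q => ?_) z
    simp only [AddMonoidHom.mk'_apply, AddMonoidHom.comp_apply, AddMonoidHom.flip_apply,
      chat_mk, mf_mk]
    rw [KGI' ε1 ε2 h1a h1b h2a h2b, ← cc2_opsmul ε1 ε2 h1a h1b h2a h2b, ← hφ]
  have hk := key (ε1.symm 1) (cc2 ε1 ε2 h1b y)
  rw [show chat ε2 h2a (ε1.symm 1) (cc2 ε1 ε2 h1b y) = cc1 ε1 ε2 h2a (cc2 ε1 ε2 h1b y)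
      from rfl, cc1_cc2 ε1 ε2 h1a h1b h2a h2b] at hk
  have h2 : cc2 ε1 ε2 h1b (ε1 (mf (ε1.symm 1)) • y) = cc2 ε1 ε2 h1b (φ y) := by
    rw [cc2_usmul ε1 ε2 h1a h1b h2a h2b, hk]
  have h3 := congrArg (cc1 ε1 ε2 h2a) h2
  rwa [cc1_cc2 ε1 ε2 h1a h1b h2a h2b, cc1_cc2 ε1 ε2 h1a h1b h2a h2b, eq_comm] at h3

end Morita


section QRside
set_option linter.unusedSectionVars false

/-! lifting machinery for `QtensR` -/

private noncomputable def QtensR.lift {X : Type u} [AddCommGroup X] (h : Q →+ R →+ X)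
    (hbal : ∀ (s : S) (q : Q) (r : R), h (op s • q) r = h q (g s * r)) :
    QtensR g Q →+ X :=
  ((Submodule.span ℤ {z : Q ⊗[ℤ] R | ∃ (s : S) (q : Q) (r : R),
      z = (op s • q) ⊗ₜ[ℤ] r - q ⊗ₜ[ℤ] (g s * r)}).liftQ
    (TensorProduct.liftAddHom h (by
      intro z m n
      rw [map_zsmul, map_zsmul]
      rfl)).toIntLinearMap
    (by
      rw [Submodule.span_le]
      rintro _ ⟨s, q, r, rfl⟩
      simp [SetLike.mem_coe, LinearMap.mem_ker, map_sub, hbal s q r])).toAddMonoidHom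

@[simp] private lemma QtensR.lift_mk {X : Type u} [AddCommGroup X] (h : Q →+ R →+ X)
    (hbal : ∀ (s : S) (q : Q) (r : R), h (op s • q) r = h q (g s * r)) (q : Q) (r : R) :
    QtensR.lift g Q h hbal (qrmk g Q q r) = h q r := rfl

private lemma QtensR.hom_ext {X : Type u} [AddCommGroup X] {F G : QtensR g Q →+ X}
    (h : ∀ q r, F (qrmk g Q q r) = G (qrmk g Q q r)) (m : QtensR g Q) : F m = G m := by
  obtain ⟨w, rfl⟩ := Submodule.Quotient.mk_surjective _ m
  induction w using TensorProduct.induction_on with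
  | zero =>
      rw [show (Submodule.Quotient.mk 0 : QtensR g Q) = 0 from Submodule.Quotient.mk_zero _]
      exact (map_zero F).trans (map_zero G).symm
  | tmul q r => exact h q r
  | add x y hx hy =>
      rw [show (Submodule.Quotient.mk (x + y) : QtensR g Q)
        = Submodule.Quotient.mk x + Submodule.Quotient.mk y from rfl]
      exact (map_add F _ _).trans ((congrArg₂ (· + ·) hx hy).trans (map_add G _ _).symm)

private lemma qr_rel (s : S) (q : Q) (r : R) :
    qrmk g Q (op s • q) r = qrmk g Q q (g s * r) :=
  (Submodule.Quotient.eq _).mpr (Submodule.subset_span ⟨s, q, r, rfl⟩)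

private lemma qrmk_add_left (q q' : Q) (r : R) :
    qrmk g Q (q + q') r = qrmk g Q q r + qrmk g Q q' r := by
  show Submodule.Quotient.mk _ = _
  rw [TensorProduct.add_tmul]; rfl

private lemma qrmk_add_right (q : Q) (r r' : R) :
    qrmk g Q q (r + r') = qrmk g Q q r + qrmk g Q q r' := by
  show Submodule.Quotient.mk _ = _
  rw [TensorProduct.tmul_add]; rfl

private lemma qrmk_zero_right (q : Q) : qrmk g Q q (0 : R) = 0 := by
  show Submodule.Quotient.mk _ = _
  rw [TensorProduct.tmul_zero]; rfl

/-! basic operators on `QtensR` -/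

private noncomputable def Lb (b : B) : QtensR g Q →+ QtensR g Q :=
  QtensR.lift g Q (mk₂' (fun q r => qrmk g Q (b • q) r)
    (fun q q' r => by beta_reduce; rw [smul_add, qrmk_add_left])
    (fun q r r' => by beta_reduce; rw [qrmk_add_right]))
    (fun s q r => by
      simp only [mk₂'_apply]
      rw [smul_comm b (op s) q, qr_rel])

@[simp] private lemma Lb_mk (b : B) (q : Q) (r : R) :
    Lb g Q b (qrmk g Q q r) = qrmk g Q (b • q) r := rfl

private noncomputable def Rr (x : R) : QtensR g Q →+ QtensR g Q :=
  QtensR.lift g Q (mk₂' (fun q r => qrmk g Q q (r * x))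
    (fun q q' r => by beta_reduce; rw [qrmk_add_left])
    (fun q r r' => by beta_reduce; rw [add_mul, qrmk_add_right]))
    (fun s q r => by
      simp only [mk₂'_apply]
      rw [qr_rel, mul_assoc])

@[simp] private lemma Rr_mk (x : R) (q : Q) (r : R) :
    Rr g Q x (qrmk g Q q r) = qrmk g Q q (r * x) := rfl

private noncomputable def qrmkH (q : Q) : R →+ QtensR g Q :=
  AddMonoidHom.mk' (fun r => qrmk g Q q r) (fun r r' => qrmk_add_right g Q q r r')

private noncomputable def iotaQ : Q →+ QtensR g Q :=
  AddMonoidHom.mk' (fun q => qrmk g Q q 1) (fun q q' => qrmk_add_left g Q q q' 1)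

variable (e4 : NCT B Qd Q ≃+ S)
  (h4b : ∀ (s : S) (q' : Qd) (q : Q),
    e4 (ncmk B Qd Q q' (op s • q)) = e4 (ncmk B Qd Q q' q) * s)

private noncomputable def mu (q' : Qd) : QtensR g Q →+ R :=
  QtensR.lift g Q (mk₂' (fun q r => g (e4 (ncmk B Qd Q q' q)) * r)
    (fun q q'' r => by beta_reduce; rw [ncmk_add_right, map_add, map_add, add_mul])
    (fun q r r' => by beta_reduce; rw [mul_add]))
    (fun s q r => by
      simp only [mk₂'_apply]
      rw [h4b, map_mul, mul_assoc])

@[simp] private lemma mu_mk (q' : Qd) (q : Q) (r : R) :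
    mu g Q Qd e4 h4b q' (qrmk g Q q r) = g (e4 (ncmk B Qd Q q' q)) * r := rfl

private noncomputable def NX (w : R) : NCT B Qd Q →+ R :=
  NCT.lift (mk₂' (fun (q' : Qd) (q : Q) => g (e4 (ncmk B Qd Q q' q)) * w)
    (fun q' q'' q => by beta_reduce; rw [ncmk_add_left, map_add, map_add, add_mul])
    (fun q' q q'' => by beta_reduce; rw [ncmk_add_right, map_add, map_add, add_mul]))
    (fun b q' q => by simp only [mk₂'_apply]; rw [ncmk_rel])

@[simp] private lemma NX_mk (w : R) (q' : Qd) (q : Q) :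
    NX g Q Qd e4 w (ncmk B Qd Q q' q) = g (e4 (ncmk B Qd Q q' q)) * w := rfl

variable (e5 : QtensR g Q ≃+ P)

private noncomputable def dl (a : A) : Q →+ QtensR g Q :=
  e5.symm.toAddMonoidHom.comp ((DistribMulAction.toAddMonoidHom P a).comp
    (e5.toAddMonoidHom.comp (iotaQ g Q)))

private lemma dl_apply (a : A) (q : Q) :
    dl g P Q e5 a q = e5.symm (a • e5 (qrmk g Q q 1)) := rfl

variable (e3 : NCT S Q Qd ≃+ B)
  (h3a : ∀ (b : B) (q : Q) (q' : Qd),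
    e3 (ncmk S Q Qd (b • q) q') = b * e3 (ncmk S Q Qd q q'))
  (h3b : ∀ (b : B) (q : Q) (q' : Qd),
    e3 (ncmk S Q Qd q (op b • q')) = e3 (ncmk S Q Qd q q') * b)
  (h4a : ∀ (s : S) (q' : Qd) (q : Q),
    e4 (ncmk B Qd Q (s • q') q) = s * e4 (ncmk B Qd Q q' q))
  (h5a : ∀ (b : B) (q : Q) (r : R),
    e5 (qrmk g Q (b • q) r) = f b • e5 (qrmk g Q q r))
  (h5b : ∀ (r' : R) (q : Q) (r : R),
    e5 (qrmk g Q q (r * r')) = op r' • e5 (qrmk g Q q r))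

private noncomputable def Ct : QtensR g Q →+ QtensR g Q :=
  QtensR.lift g Q (mk₂' (fun q r => qrmk g Q (cc1 e3 e4 h4a q) r)
    (fun q q' r => by beta_reduce; rw [map_add, qrmk_add_left])
    (fun q r r' => by beta_reduce; rw [qrmk_add_right]))
    (fun s q r => by
      simp only [mk₂'_apply]
      rw [cc1_opsmul e3 e4 h3a h3b h4a h4b, qr_rel])

@[simp] private lemma Ct_mk (q : Q) (r : R) :
    Ct g Q Qd e4 h4b e3 h3a h3b h4a (qrmk g Q q r) = qrmk g Q (cc1 e3 e4 h4a q) r := rfl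

private noncomputable def Ct' : QtensR g Q →+ QtensR g Q :=
  QtensR.lift g Q (mk₂' (fun q r => qrmk g Q (cc2 e3 e4 h3b q) r)
    (fun q q' r => by beta_reduce; rw [map_add, qrmk_add_left])
    (fun q r r' => by beta_reduce; rw [qrmk_add_right]))
    (fun s q r => by
      simp only [mk₂'_apply]
      rw [cc2_opsmul e3 e4 h3a h3b h4a h4b, qr_rel])

@[simp] private lemma Ct'_mk (q : Q) (r : R) :
    Ct' g Q Qd e4 h4b e3 h3a h3b h4a (qrmk g Q q r) = qrmk g Q (cc2 e3 e4 h3b q) r := rfl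

include f g P Pd Q Qd e4 h4b e5 e3 h3a h3b h4a h5a h5b

private lemma epsL (b : B) (m : QtensR g Q) : e5 (Lb g Q b m) = f b • e5 m :=
  QtensR.hom_ext g Q (F := e5.toAddMonoidHom.comp (Lb g Q b))
    (G := (DistribMulAction.toAddMonoidHom P (f b)).comp e5.toAddMonoidHom)
    (fun q r => by simp [h5a]) m

private lemma epsR (x : R) (m : QtensR g Q) : e5 (Rr g Q x m) = op x • e5 m :=
  QtensR.hom_ext g Q (F := e5.toAddMonoidHom.comp (Rr g Q x))
    (G := (DistribMulAction.toAddMonoidHom P (op x)).comp e5.toAddMonoidHom)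
    (fun q r => by simp [h5b]) m

private lemma mu_opB (b : B) (q' : Qd) (m : QtensR g Q) :
    mu g Q Qd e4 h4b (op b • q') m = mu g Q Qd e4 h4b q' (Lb g Q b m) :=
  QtensR.hom_ext g Q (F := mu g Q Qd e4 h4b (op b • q'))
    (G := (mu g Q Qd e4 h4b q').comp (Lb g Q b))
    (fun q r => by
      simp only [mu_mk, AddMonoidHom.comp_apply, Lb_mk]
      rw [ncmk_rel]) m

private lemma mu_addl (q' q'' : Qd) (m : QtensR g Q) :
    mu g Q Qd e4 h4b (q' + q'') m = mu g Q Qd e4 h4b q' m + mu g Q Qd e4 h4b q'' m :=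
  QtensR.hom_ext g Q (F := mu g Q Qd e4 h4b (q' + q''))
    (G := mu g Q Qd e4 h4b q' + mu g Q Qd e4 h4b q'')
    (fun q r => by
      simp only [mu_mk, AddMonoidHom.add_apply]
      rw [ncmk_add_left, map_add, map_add, add_mul]) m

private lemma CtCt' (m : QtensR g Q) :
    Ct' g Q Qd e4 h4b e3 h3a h3b h4a (Ct g Q Qd e4 h4b e3 h3a h3b h4a m) = m :=
  QtensR.hom_ext g Q
    (F := (Ct' g Q Qd e4 h4b e3 h3a h3b h4a).comp (Ct g Q Qd e4 h4b e3 h3a h3b h4a))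
    (G := AddMonoidHom.id _)
    (fun q r => by
      simp only [AddMonoidHom.comp_apply, Ct_mk, Ct'_mk, AddMonoidHom.id_apply]
      rw [cc2_cc1 e3 e4 h3a h3b h4a h4b]) m

private lemma Ct_Lb (b : B) (m : QtensR g Q) :
    Ct g Q Qd e4 h4b e3 h3a h3b h4a (Lb g Q b m)
      = Lb g Q b (Ct g Q Qd e4 h4b e3 h3a h3b h4a m) :=
  QtensR.hom_ext g Q
    (F := (Ct g Q Qd e4 h4b e3 h3a h3b h4a).comp (Lb g Q b))
    (G := (Lb g Q b).comp (Ct g Q Qd e4 h4b e3 h3a h3b h4a))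
    (fun q r => by
      simp only [AddMonoidHom.comp_apply, Ct_mk, Lb_mk]
      rw [cc1_usmul e3 e4 h3a h3b h4a h4b]) m

private lemma master (qh : Q) (q' : Qd) (m : QtensR g Q) :
    qrmk g Q qh (mu g Q Qd e4 h4b q' m)
      = Lb g Q (e3 (ncmk S Q Qd qh q')) (Ct g Q Qd e4 h4b e3 h3a h3b h4a m) :=
  QtensR.hom_ext g Q
    (F := (qrmkH g Q qh).comp (mu g Q Qd e4 h4b q'))
    (G := (Lb g Q (e3 (ncmk S Q Qd qh q'))).comp (Ct g Q Qd e4 h4b e3 h3a h3b h4a))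
    (fun a r => by
      show qrmk g Q qh (g (e4 (ncmk B Qd Q q' a)) * r)
        = qrmk g Q (e3 (ncmk S Q Qd qh q') • cc1 e3 e4 h4a a) r
      rw [KGI e3 e4 h3a h3b h4a h4b, qr_rel]) m

private lemma dlB (a : A) (hc : ∀ b : B, f b * a = a * f b) (b : B) (q : Q) :
    dl g P Q e5 a (b • q) = Lb g Q b (dl g P Q e5 a q) := by
  have h1 : e5 (dl g P Q e5 a (b • q)) = f b • (a • e5 (qrmk g Q q 1)) := by
    rw [dl_apply, AddEquiv.apply_symm_apply, h5a, ← mul_smul, ← hc, mul_smul]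
  have h2 : e5 (Lb g Q b (dl g P Q e5 a q)) = f b • (a • e5 (qrmk g Q q 1)) := by
    rw [epsL f g P Pd Q Qd e4 h4b e5 e3 h3a h3b h4a h5a h5b, dl_apply,
      AddEquiv.apply_symm_apply]
  exact e5.injective (h1.trans h2.symm)

private lemma dlS (a : A) (s : S) (q : Q) :
    dl g P Q e5 a (op s • q) = Rr g Q (g s) (dl g P Q e5 a q) := by
  have h1 : e5 (dl g P Q e5 a (op s • q)) = op (g s) • (a • e5 (qrmk g Q q 1)) := by
    rw [dl_apply, AddEquiv.apply_symm_apply, qr_rel, mul_one,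
      show (g s : R) = 1 * g s from (one_mul _).symm, h5b, smul_comm, one_mul]
  have h2 : e5 (Rr g Q (g s) (dl g P Q e5 a q)) = op (g s) • (a • e5 (qrmk g Q q 1)) := by
    rw [epsR f g P Pd Q Qd e4 h4b e5 e3 h3a h3b h4a h5a h5b, dl_apply,
      AddEquiv.apply_symm_apply]
  exact e5.injective (h1.trans h2.symm)

private noncomputable def ThetaHom (a : A) (hc : ∀ b : B, f b * a = a * f b) :
    NCT B Qd Q →+ R :=
  NCT.lift (mk₂' (fun (q' : Qd) (q : Q) => mu g Q Qd e4 h4b q' (dl g P Q e5 a q))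
    (fun q' q'' q => by beta_reduce; rw [mu_addl f g P Pd Q Qd e4 h4b e5 e3 h3a h3b h4a h5a h5b])
    (fun q' q q'' => by beta_reduce; rw [map_add, map_add]))
    (fun b q' q => by
      simp only [mk₂'_apply]
      rw [mu_opB f g P Pd Q Qd e4 h4b e5 e3 h3a h3b h4a h5a h5b, ← dlB f g P Pd Q Qd e4 h4b e5 e3 h3a h3b h4a h5a h5b a hc])

@[simp] private lemma ThetaHom_mk (a : A) (hc : ∀ b : B, f b * a = a * f b)
    (q' : Qd) (q : Q) :
    ThetaHom f g P Pd Q Qd e4 h4b e5 e3 h3a h3b h4a h5a h5b a hc (ncmk B Qd Q q' q)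
      = mu g Q Qd e4 h4b q' (dl g P Q e5 a q) := rfl

private noncomputable def Theta (a : A) (hc : ∀ b : B, f b * a = a * f b) : R :=
  ThetaHom f g P Pd Q Qd e4 h4b e5 e3 h3a h3b h4a h5a h5b a hc (e4.symm 1)

private lemma KEY1 (a : A) (hc : ∀ b : B, f b * a = a * f b) (x : Q) :
    dl g P Q e5 a x = qrmk g Q x (Theta f g P Pd Q Qd e4 h4b e5 e3 h3a h3b h4a h5a h5b a hc) := by
  have stepA : ∀ qh : Q, qrmk g Q qh (Theta f g P Pd Q Qd e4 h4b e5 e3 h3a h3b h4a h5a h5b a hc)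
      = Ct g Q Qd e4 h4b e3 h3a h3b h4a (dl g P Q e5 a (cc2 e3 e4 h3b qh)) := by
    intro qh
    refine NCT.hom_ext
      (F := (qrmkH g Q qh).comp (ThetaHom f g P Pd Q Qd e4 h4b e5 e3 h3a h3b h4a h5a h5b a hc))
      (G := (Ct g Q Qd e4 h4b e3 h3a h3b h4a).comp ((dl g P Q e5 a).comp
        ((chat' e3 h3b).flip qh)))
      (fun q' q₀ => ?_) (e4.symm 1)
    show qrmk g Q qh (mu g Q Qd e4 h4b q' (dl g P Q e5 a q₀))
      = Ct g Q Qd e4 h4b e3 h3a h3b h4a (dl g P Q e5 a (e3 (ncmk S Q Qd qh q') • q₀))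
    rw [master f g P Pd Q Qd e4 h4b e5 e3 h3a h3b h4a h5a h5b, dlB f g P Pd Q Qd e4 h4b e5 e3 h3a h3b h4a h5a h5b a hc, Ct_Lb f g P Pd Q Qd e4 h4b e5 e3 h3a h3b h4a h5a h5b]
  have h1 := stepA (cc1 e3 e4 h4a x)
  rw [cc2_cc1 e3 e4 h3a h3b h4a h4b] at h1
  have h2 := congrArg (Ct' g Q Qd e4 h4b e3 h3a h3b h4a) h1
  rw [Ct'_mk, cc2_cc1 e3 e4 h3a h3b h4a h4b, CtCt' f g P Pd Q Qd e4 h4b e5 e3 h3a h3b h4a h5a h5b] at h2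
  exact h2.symm

private lemma collapse (x y : R) (h : ∀ q : Q, qrmk g Q q x = qrmk g Q q y) : x = y := by
  have hNX : ∀ (w : R) (z : NCT B Qd Q), NX g Q Qd e4 w z = g (e4 z) * w := fun w =>
    NCT.hom_ext (F := NX g Q Qd e4 w)
      (G := (AddMonoidHom.mulRight w).comp (g.toAddMonoidHom.comp e4.toAddMonoidHom))
      (fun q' q => by simp)
  have h1 : ∀ w : R, NX g Q Qd e4 w (e4.symm 1) = w := by
    intro w; rw [hNX, AddEquiv.apply_symm_apply, map_one, one_mul]
  have hxy : NX g Q Qd e4 x (e4.symm 1) = NX g Q Qd e4 y (e4.symm 1) :=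
    NCT.hom_ext (F := NX g Q Qd e4 x) (G := NX g Q Qd e4 y)
      (fun q' q => by
        simp only [NX_mk]
        have := congrArg (mu g Q Qd e4 h4b q') (h q)
        simpa using this) _
  rw [← h1 x, ← h1 y]
  exact hxy

private lemma Thetamem (a : A) (hc : ∀ b : B, f b * a = a * f b) (s : S) :
    g s * Theta f g P Pd Q Qd e4 h4b e5 e3 h3a h3b h4a h5a h5b a hc = Theta f g P Pd Q Qd e4 h4b e5 e3 h3a h3b h4a h5a h5b a hc * g s := by
  apply collapse f g P Pd Q Qd e4 h4b e5 e3 h3a h3b h4a h5a h5b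
  intro q
  have hmain : qrmk g Q (op s • q) (Theta f g P Pd Q Qd e4 h4b e5 e3 h3a h3b h4a h5a h5b a hc)
      = Rr g Q (g s) (qrmk g Q q (Theta f g P Pd Q Qd e4 h4b e5 e3 h3a h3b h4a h5a h5b a hc)) := by
    rw [← KEY1 f g P Pd Q Qd e4 h4b e5 e3 h3a h3b h4a h5a h5b a hc, dlS f g P Pd Q Qd e4 h4b e5 e3 h3a h3b h4a h5a h5b a s q, KEY1 f g P Pd Q Qd e4 h4b e5 e3 h3a h3b h4a h5a h5b a hc]
  rw [qr_rel, Rr_mk] at hmain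
  exact hmain

variable (e1 : NCT R P Pd ≃+ A)
  (hp1a : ∀ (a : A) (p : P) (q : Pd),
    e1 (ncmk R P Pd (a • p) q) = a * e1 (ncmk R P Pd p q))
  (hp1b : ∀ (a : A) (p : P) (q : Pd),
    e1 (ncmk R P Pd p (op a • q)) = e1 (ncmk R P Pd p q) * a)
  (e2 : NCT A Pd P ≃+ R)
  (hp2a : ∀ (r : R) (q : Pd) (p : P),
    e2 (ncmk A Pd P (r • q) p) = r * e2 (ncmk A Pd P q p))
  (hp2b : ∀ (r : R) (q : Pd) (p : P),
    e2 (ncmk A Pd P q (op r • p)) = e2 (ncmk A Pd P q p) * r)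

include e1 hp1a hp1b e2 hp2a hp2b

private theorem main : Nonempty (Subring.centralizer (Set.range f) ≃+*
    Subring.centralizer (Set.range g)) := by
  have hcA : ∀ (a : Subring.centralizer (Set.range f)) (b : B),
      f b * a.1 = a.1 * f b := fun a b =>
    Subring.mem_centralizer_iff.mp a.2 (f b) ⟨b, rfl⟩
  -- the forward map
  have ThMem : ∀ a : Subring.centralizer (Set.range f),
      Theta f g P Pd Q Qd e4 h4b e5 e3 h3a h3b h4a h5a h5b a.1 (hcA a) ∈ Subring.centralizer (Set.range g) := by
    intro a
    rw [Subring.mem_centralizer_iff]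
    rintro _ ⟨s, rfl⟩
    exact Thetamem f g P Pd Q Qd e4 h4b e5 e3 h3a h3b h4a h5a h5b a.1 (hcA a) s
  set F : Subring.centralizer (Set.range f) → Subring.centralizer (Set.range g) :=
    fun a => ⟨Theta f g P Pd Q Qd e4 h4b e5 e3 h3a h3b h4a h5a h5b a.1 (hcA a), ThMem a⟩ with hF
  have hFval : ∀ a, (F a).1 = Theta f g P Pd Q Qd e4 h4b e5 e3 h3a h3b h4a h5a h5b a.1 (hcA a) := fun a => rfl
  -- generic identity : a • e5 (qrmk q 1) = e5 (qrmk q (Theta a hc))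
  have hdl : ∀ (a : A) (hc : ∀ b : B, f b * a = a * f b) (q : Q),
      a • e5 (qrmk g Q q 1) = e5 (qrmk g Q q (Theta f g P Pd Q Qd e4 h4b e5 e3 h3a h3b h4a h5a h5b a hc)) := by
    intro a hc q
    have := congrArg e5 (KEY1 f g P Pd Q Qd e4 h4b e5 e3 h3a h3b h4a h5a h5b a hc q)
    rwa [dl_apply, AddEquiv.apply_symm_apply] at this
  have hop : ∀ (x : R) (q : Q), e5 (qrmk g Q q x) = op x • e5 (qrmk g Q q 1) := by
    intro x q
    rw [show (x : R) = 1 * x from (one_mul _).symm, h5b, one_mul]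
  -- additivity
  have Fadd : ∀ a a', F (a + a') = F a + F a' := by
    intro a a'
    refine Subtype.ext ?_
    apply collapse f g P Pd Q Qd e4 h4b e5 e3 h3a h3b h4a h5a h5b
    intro q
    have l1 := hdl (a.1 + a'.1) (hcA (a + a')) q
    rw [add_smul, hdl a.1 (hcA a) q, hdl a'.1 (hcA a') q, ← map_add,
      ← qrmk_add_right] at l1
    exact e5.injective l1.symm
  -- multiplicativity
  have Fmul : ∀ a a', F (a * a') = F a * F a' := by
    intro a a'
    refine Subtype.ext ?_
    apply collapse f g P Pd Q Qd e4 h4b e5 e3 h3a h3b h4a h5a h5b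
    intro q
    have l1 := hdl (a.1 * a'.1) (hcA (a * a')) q
    rw [mul_smul, hdl a'.1 (hcA a') q, hop, smul_comm, hdl a.1 (hcA a) q,
      ← h5b] at l1
    exact e5.injective l1.symm
  have Fone : F 1 = 1 := by
    refine Subtype.ext ?_
    apply collapse f g P Pd Q Qd e4 h4b e5 e3 h3a h3b h4a h5a h5b
    intro q
    have l1 := hdl (1 : A) (hcA 1) q
    rw [one_smul] at l1
    exact (e5.injective l1).symm
  have Fzero : F 0 = 0 := by
    refine Subtype.ext ?_
    apply collapse f g P Pd Q Qd e4 h4b e5 e3 h3a h3b h4a h5a h5b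
    intro q
    have l1 := hdl (0 : A) (hcA 0) q
    rw [zero_smul] at l1
    have l2 : e5 (qrmk g Q q (0 : R)) = 0 := by rw [qrmk_zero_right, map_zero]
    rw [← l2] at l1
    exact (e5.injective l1).symm
  -- injectivity
  have Finj : Function.Injective F := by
    intro a a' hFa
    have hval : Theta f g P Pd Q Qd e4 h4b e5 e3 h3a h3b h4a h5a h5b a.1 (hcA a) = Theta f g P Pd Q Qd e4 h4b e5 e3 h3a h3b h4a h5a h5b a'.1 (hcA a') :=
      congrArg Subtype.val hFa
    have hdq : ∀ q : Q, (a.1 - a'.1) • e5 (qrmk g Q q 1) = 0 := by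
      intro q
      rw [sub_smul, hdl a.1 (hcA a) q, hdl a'.1 (hcA a') q, hval, sub_self]
    have hzm : ∀ m : QtensR g Q, (a.1 - a'.1) • e5 m = 0 := by
      intro m
      refine QtensR.hom_ext g Q
        (F := (DistribMulAction.toAddMonoidHom P (a.1 - a'.1)).comp e5.toAddMonoidHom)
        (G := 0) (fun q r => ?_) m
      show (a.1 - a'.1) • e5 (qrmk g Q q r) = 0
      rw [hop r q, smul_comm, hdq q, smul_zero]
    have hzp : ∀ p : P, (a.1 - a'.1) • p = 0 := by
      intro p
      have := hzm (e5.symm p)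
      rwa [AddEquiv.apply_symm_apply] at this
    have := eq_zero_of_smul_zero e1 e2 hp1a hp1b hp2a hp2b _ hzp
    exact Subtype.ext (sub_eq_zero.mp this)
  -- surjectivity
  have Fsurj : Function.Surjective F := by
    rintro ⟨r₀, hr₀⟩
    have hcent : ∀ s : S, g s * r₀ = r₀ * g s := fun s =>
      Subring.mem_centralizer_iff.mp hr₀ (g s) ⟨s, rfl⟩
    set psi : QtensR g Q →+ QtensR g Q := QtensR.lift g Q
      (mk₂' (fun q r => qrmk g Q q (r₀ * r))
        (fun q q' r => by beta_reduce; rw [qrmk_add_left])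
        (fun q r r' => by beta_reduce; rw [mul_add, qrmk_add_right]))
      (fun s q r => by
        simp only [mk₂'_apply]
        rw [qr_rel, ← mul_assoc, hcent s, mul_assoc]) with hpsidef
    have psi_mk : ∀ q r, psi (qrmk g Q q r) = qrmk g Q q (r₀ * r) := fun q r => rfl
    set phi : P →+ P := e5.toAddMonoidHom.comp (psi.comp e5.symm.toAddMonoidHom)
      with hphidef
    have phi_apply : ∀ p, phi p = e5 (psi (e5.symm p)) := fun p => rfl
    have psiRr : ∀ (x : R) (m : QtensR g Q), psi (Rr g Q x m) = Rr g Q x (psi m) :=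
      fun x =>
      QtensR.hom_ext g Q (F := psi.comp (Rr g Q x)) (G := (Rr g Q x).comp psi)
        (fun q r => by
          show qrmk g Q q (r₀ * (r * x)) = qrmk g Q q (r₀ * r * x)
          rw [mul_assoc])
    have psiLb : ∀ (b : B) (m : QtensR g Q), psi (Lb g Q b m) = Lb g Q b (psi m) :=
      fun b =>
      QtensR.hom_ext g Q (F := psi.comp (Lb g Q b)) (G := (Lb g Q b).comp psi)
        (fun q r => rfl)
    have e5symm_op : ∀ (x : R) (p : P), e5.symm (op x • p) = Rr g Q x (e5.symm p) := by
      intro x p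
      apply e5.injective
      rw [AddEquiv.apply_symm_apply, epsR f g P Pd Q Qd e4 h4b e5 e3 h3a h3b h4a h5a h5b, AddEquiv.apply_symm_apply]
    have hphi : ∀ (t : R) (p : P), phi (op t • p) = op t • phi p := by
      intro t p
      rw [phi_apply, phi_apply, e5symm_op, psiRr, epsR f g P Pd Q Qd e4 h4b e5 e3 h3a h3b h4a h5a h5b]
    obtain ⟨a₀, ha₀⟩ := lmul_surj e1 e2 hp1a hp1b hp2a hp2b phi hphi
    have e5symm_fb : ∀ (b : B) (p : P), e5.symm (f b • p) = Lb g Q b (e5.symm p) := by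
      intro b p
      apply e5.injective
      rw [AddEquiv.apply_symm_apply, epsL f g P Pd Q Qd e4 h4b e5 e3 h3a h3b h4a h5a h5b, AddEquiv.apply_symm_apply]
    have hc₀ : ∀ b : B, f b * a₀ = a₀ * f b := by
      intro b
      have hzz : ∀ p : P, (f b * a₀ - a₀ * f b) • p = 0 := by
        intro p
        have l1 : (f b * a₀) • p = f b • phi p := by rw [mul_smul, ← ha₀ p]
        have l2 : (a₀ * f b) • p = phi (f b • p) := by rw [mul_smul, ← ha₀ (f b • p)]
        have l3 : phi (f b • p) = f b • phi p := by
          rw [phi_apply, phi_apply, e5symm_fb, psiLb, epsL f g P Pd Q Qd e4 h4b e5 e3 h3a h3b h4a h5a h5b]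
        rw [sub_smul, l1, l2, l3, sub_self]
      exact sub_eq_zero.mp (eq_zero_of_smul_zero e1 e2 hp1a hp1b hp2a hp2b _ hzz)
    have hδa₀ : ∀ q : Q, dl g P Q e5 a₀ q = qrmk g Q q r₀ := by
      intro q
      rw [dl_apply, ← ha₀, phi_apply, AddEquiv.symm_apply_apply,
        AddEquiv.symm_apply_apply, psi_mk, mul_one]
    refine ⟨⟨a₀, Subring.mem_centralizer_iff.mpr ?_⟩, Subtype.ext ?_⟩
    · rintro _ ⟨b, rfl⟩; exact hc₀ b
    · show Theta f g P Pd Q Qd e4 h4b e5 e3 h3a h3b h4a h5a h5b a₀ _ = r₀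
      apply collapse f g P Pd Q Qd e4 h4b e5 e3 h3a h3b h4a h5a h5b
      intro q
      rw [← KEY1 f g P Pd Q Qd e4 h4b e5 e3 h3a h3b h4a h5a h5b a₀ hc₀ q, hδa₀ q]
  -- assemble the ring equivalence
  have Fhom : Subring.centralizer (Set.range f) →+* Subring.centralizer (Set.range g) :=
    { toFun := F, map_one' := Fone, map_mul' := Fmul, map_zero' := Fzero,
      map_add' := Fadd }
  exact ⟨RingEquiv.ofBijective
    ({ toFun := F, map_one' := Fone, map_mul' := Fmul, map_zero' := Fzero,
       map_add' := Fadd } :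
      Subring.centralizer (Set.range f) →+* Subring.centralizer (Set.range g))
    ⟨Finj, Fsurj⟩⟩


end QRside

/-- **Centralizers are Morita invariants of ring extensions.**
If the ring extensions `A ⊇ B` and `R ⊇ S` are Morita equivalent, via
invertible bimodules `P` (an `A`-`R`-bimodule with inverse `Pd`) and `Q` (a
`B`-`S`-bimodule with inverse `Qd`) satisfying `Q ⊗_S R ≅ P` as
`B`-`R`-bimodules, then the centralizers `A^B` and `R^S` are isomorphic as
rings. -/
theorem centralizer_iso_of_morita_extension
    (ePPd : ∃ e : NCT R P Pd ≃+ A,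
      (∀ (a : A) (p : P) (q : Pd),
        e (ncmk R P Pd (a • p) q) = a * e (ncmk R P Pd p q)) ∧
      (∀ (a : A) (p : P) (q : Pd),
        e (ncmk R P Pd p (op a • q)) = e (ncmk R P Pd p q) * a))
    (ePdP : ∃ e : NCT A Pd P ≃+ R,
      (∀ (r : R) (q : Pd) (p : P),
        e (ncmk A Pd P (r • q) p) = r * e (ncmk A Pd P q p)) ∧
      (∀ (r : R) (q : Pd) (p : P),
        e (ncmk A Pd P q (op r • p)) = e (ncmk A Pd P q p) * r))
    (eQQd : ∃ e : NCT S Q Qd ≃+ B,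
      (∀ (b : B) (q : Q) (q' : Qd),
        e (ncmk S Q Qd (b • q) q') = b * e (ncmk S Q Qd q q')) ∧
      (∀ (b : B) (q : Q) (q' : Qd),
        e (ncmk S Q Qd q (op b • q')) = e (ncmk S Q Qd q q') * b))
    (eQdQ : ∃ e : NCT B Qd Q ≃+ S,
      (∀ (s : S) (q' : Qd) (q : Q),
        e (ncmk B Qd Q (s • q') q) = s * e (ncmk B Qd Q q' q)) ∧
      (∀ (s : S) (q' : Qd) (q : Q),
        e (ncmk B Qd Q q' (op s • q)) = e (ncmk B Qd Q q' q) * s))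
    (hQR : ∃ e : QtensR g Q ≃+ P,
      (∀ (b : B) (q : Q) (r : R),
        e (qrmk g Q (b • q) r) = f b • e (qrmk g Q q r)) ∧
      (∀ (r' : R) (q : Q) (r : R),
        e (qrmk g Q q (r * r')) = op r' • e (qrmk g Q q r))) :
    Nonempty (Subring.centralizer (Set.range f) ≃+*
      Subring.centralizer (Set.range g)) := by
  obtain ⟨e1, hp1a, hp1b⟩ := ePPd
  obtain ⟨e2, hp2a, hp2b⟩ := ePdP
  obtain ⟨e3, h3a, h3b⟩ := eQQd
  obtain ⟨e4, h4a, h4b⟩ := eQdQ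
  obtain ⟨e5, h5a, h5b⟩ := hQR
  exact main f g P Pd Q Qd e4 h4b e5 e3 h3a h3b h4a h5a h5b e1 hp1a hp1b e2 hp2a hp2b
end
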